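/- Let d ≥ 2 and let K ⊆ ℝ^d be the attractor of a self-similar IFS ℱ = {f₁, …, f_m} satisfying the finite type condition and such that f_i(K) ∩ f_j(K) is finite for all 1 ≤ i < j ≤ m. Then K has Nagata dimension at most 1: there exists c > 0 such that for every s > 0 the set K admits an s-cover 𝒰₀ ∪ 𝒰₁ where each 𝒰_i is cs-separated. -/

import Mathlib

open Set
open scoped ENNReal
set_option linter.unusedSectionVars false
set_option maxHeartbeats 1000000

/-- The composition `f_𝐢 = f_{i₁} ∘ ⋯ ∘ f_{i_k}` associated with a finite word
`𝐢 = i₁⋯i_k` (the empty word gives the identity). -/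
def wordMap {d m : ℕ} (f : Fin m → EuclideanSpace ℝ (Fin d) → EuclideanSpace ℝ (Fin d)) :
    List (Fin m) → EuclideanSpace ℝ (Fin d) → EuclideanSpace ℝ (Fin d) :=
  fun l => l.foldr (fun i g => f i ∘ g) id

/-- The set `N_ε(ℱ)` of neighbor maps `h = f_𝐢⁻¹ ∘ f_𝐣 ≠ id` (encoded by
`f_𝐢 ∘ h = f_𝐣`) whose similarity ratio lies in `[r_min, r_min⁻¹]` and for which
`[K]_ε ∩ h([K]_ε) ≠ ∅`, where `[K]_ε` is the closed `ε`-neighborhood of `K`. -/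
def NeighborSet {d m : ℕ} (f : Fin m → EuclideanSpace ℝ (Fin d) → EuclideanSpace ℝ (Fin d))
    (rmin : ℝ) (K : Set (EuclideanSpace ℝ (Fin d))) (ε : ℝ) :
    Set (EuclideanSpace ℝ (Fin d) → EuclideanSpace ℝ (Fin d)) :=
  {h | (∃ I J : List (Fin m), wordMap f I ∘ h = wordMap f J) ∧ h ≠ id ∧
       (∃ ρ : ℝ, rmin ≤ ρ ∧ ρ ≤ rmin⁻¹ ∧ ∀ x y, dist (h x) (h y) = ρ * dist x y) ∧
       (Metric.cthickening ε K ∩ h '' Metric.cthickening ε K).Nonempty}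

namespace NagataAux

/-- Euclidean space ℝ^d. -/
abbrev X (d : ℕ) := EuclideanSpace ℝ (Fin d)

noncomputable section Aux
variable {d m : ℕ}

/-- product of ratios along a word -/
def prodr (r : Fin m → ℝ) (I : List (Fin m)) : ℝ := (I.map r).prod

variable (f : Fin m → X d → X d) (r : Fin m → ℝ)

@[simp] lemma prodr_nil : prodr r [] = 1 := rfl
@[simp] lemma prodr_cons (i : Fin m) (I : List (Fin m)) :
    prodr r (i :: I) = r i * prodr r I := by simp [prodr]
lemma prodr_append (I J : List (Fin m)) :
    prodr r (I ++ J) = prodr r I * prodr r J := by simp [prodr]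

variable (hr : ∀ i, 0 < r i ∧ r i < 1)
include hr

lemma prodr_pos (I : List (Fin m)) : 0 < prodr r I := by
  induction I with
  | nil => simp
  | cons i I ih => simpa using mul_pos (hr i).1 ih

lemma prodr_le_one (I : List (Fin m)) : prodr r I ≤ 1 := by
  induction I with
  | nil => simp
  | cons i I ih =>
    simp only [prodr_cons]
    calc r i * prodr r I ≤ 1 * 1 := by
          apply mul_le_mul (hr i).2.le ih (prodr_pos r hr I).le zero_le_one
      _ = 1 := one_mul 1

lemma prodr_prefix_le {I J : List (Fin m)} (h : I <+: J) : prodr r J ≤ prodr r I := by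
  obtain ⟨L, rfl⟩ := h
  rw [prodr_append]
  nth_rewrite 2 [← mul_one (prodr r I)]
  exact mul_le_mul_of_nonneg_left (prodr_le_one r hr L) (prodr_pos r hr I).le

omit hr

@[simp] lemma wordMap_nil : wordMap f [] = id := rfl
@[simp] lemma wordMap_cons (i : Fin m) (I : List (Fin m)) :
    wordMap f (i :: I) = f i ∘ wordMap f I := rfl
lemma wordMap_append (I J : List (Fin m)) :
    wordMap f (I ++ J) = wordMap f I ∘ wordMap f J := by
  induction I with
  | nil => rfl
  | cons i I ih => simp only [List.cons_append, wordMap_cons, ih]; rfl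

variable (hsim : ∀ i, ∀ x y, dist (f i x) (f i y) = r i * dist x y)
include hsim

lemma dist_wordMap (I : List (Fin m)) (x y : X d) :
    dist (wordMap f I x) (wordMap f I y) = prodr r I * dist x y := by
  induction I with
  | nil => simp
  | cons i I ih => simp [hsim, ih, mul_assoc]

include hr

lemma wordMap_injective (I : List (Fin m)) : Function.Injective (wordMap f I) := by
  intro x y hxy
  have h2 := dist_wordMap f r hsim I x y
  rw [hxy, dist_self] at h2
  have h3 := (mul_eq_zero.1 h2.symm).resolve_left (prodr_pos r hr I).ne'
  exact dist_eq_zero.1 h3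

lemma wordMap_lipschitz (I : List (Fin m)) :
    LipschitzWith (Real.toNNReal (prodr r I)) (wordMap f I) := by
  apply LipschitzWith.of_dist_le_mul
  intro x y
  rw [dist_wordMap f r hsim I x y, Real.coe_toNNReal _ (prodr_pos r hr I).le]

lemma wordMap_continuous (I : List (Fin m)) : Continuous (wordMap f I) :=
  (wordMap_lipschitz f r hr hsim I).continuous

lemma wordMap_surjective (I : List (Fin m)) : Function.Surjective (wordMap f I) := by
  induction I with
  | nil => exact Function.surjective_id
  | cons i I ih =>
    rw [wordMap_cons]
    refine Function.Surjective.comp ?_ ih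
    · set g' : X d → X d := fun x => (r i)⁻¹ • f i x with hg'
      have hiso : Isometry g' := by
        apply Isometry.of_dist_eq
        intro x y
        simp only [hg', dist_smul₀, hsim, norm_inv, Real.norm_of_nonneg (hr i).1.le]
        field_simp
        rw [mul_comm, mul_div_assoc, div_self (hr i).1.ne', mul_one]
      have hsurj' : Function.Surjective g' :=
        (hiso.affineIsometryOfStrictConvexSpace.toAffineIsometryEquiv rfl).surjective
      intro z
      obtain ⟨x, hx⟩ := hsurj' ((r i)⁻¹ • z)
      exact ⟨x, smul_right_injective _ (inv_ne_zero (hr i).1.ne') hx⟩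


/-- Stopping set: minimal words with ratio product `≤ t`. -/
def Stopping (r : Fin m → ℝ) (t : ℝ) : Set (List (Fin m)) :=
  {I | prodr r I ≤ t ∧ ∀ J, J <+: I → J ≠ I → t < prodr r J}

variable {t u v : ℝ} {rmax : ℝ}

omit hr hsim in
lemma list_split {I J : List (Fin m)} (h1 : ¬ I <+: J) (h2 : ¬ J <+: I) :
    ∃ (W : List (Fin m)) (i j : Fin m) (I' J' : List (Fin m)),
      i ≠ j ∧ I = W ++ i :: I' ∧ J = W ++ j :: J' := by
  induction I generalizing J with
  | nil => exact absurd (List.nil_prefix) h1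
  | cons a I₂ ih =>
    cases J with
    | nil => exact absurd (List.nil_prefix) h2
    | cons b J₂ =>
      by_cases hab : a = b
      · subst hab
        rw [List.cons_prefix_cons] at h1 h2
        push_neg at h1 h2
        obtain ⟨W, i, j, I', J', hij, hI, hJ⟩ := ih (h1 rfl) (h2 rfl)
        exact ⟨a :: W, i, j, I', J', hij, by simp [hI], by simp [hJ]⟩
      · exact ⟨[], a, b, I₂, J₂, hab, rfl, rfl⟩

omit hsim in
lemma prodr_le_pow (hrmax : ∀ i, r i ≤ rmax) (I : List (Fin m)) :
    prodr r I ≤ rmax ^ I.length := by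
  induction I with
  | nil => simp
  | cons i I ih =>
    simp only [prodr_cons, List.length_cons, pow_succ]
    rw [mul_comm (rmax ^ I.length) rmax]
    exact mul_le_mul (hrmax i) ih (prodr_pos r hr I).le
      ((hr i).1.le.trans (hrmax i))

omit hr hsim in
lemma stopping_le (hI : I ∈ Stopping r t) : prodr r I ≤ t := hI.1

omit hsim in
lemma stopping_lb {rmin : ℝ} (hrmin0 : 0 < rmin) (hrmin : ∀ i, rmin ≤ r i)
    (hrmin1 : rmin < 1)
    (ht : 0 ≤ t) (ht1 : t ≤ 1) {I : List (Fin m)} (hI : I ∈ Stopping r t) :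
    t * rmin < prodr r I := by
  induction I using List.reverseRecOn with
  | nil =>
    simp only [prodr_nil]
    calc t * rmin ≤ 1 * rmin := mul_le_mul_of_nonneg_right ht1 hrmin0.le
      _ = rmin := one_mul rmin
      _ < 1 := hrmin1
  | append_singleton J i _ =>
    have hJ : t < prodr r J := hI.2 J (by simp) (by
      intro h; apply_fun List.length at h; simp at h)
    rw [prodr_append]
    simp only [prodr_cons, prodr_nil, mul_one]
    calc t * rmin ≤ t * r i := mul_le_mul_of_nonneg_left (hrmin i) ht
      _ < prodr r J * r i := mul_lt_mul_of_pos_right hJ (hr i).1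

omit hr hsim in
lemma stopping_antichain {I J : List (Fin m)} (hI : I ∈ Stopping r t)
    (hJ : J ∈ Stopping r t) (hIJ : I <+: J) : I = J := by
  by_contra hne
  exact absurd hI.1 (not_le.2 (hJ.2 I hIJ hne))

omit hr hsim in
lemma prefix_eq_take {I J : List (Fin m)} (h : I <+: J) : I = J.take I.length :=
  (List.prefix_iff_eq_take.1 h)

omit hr hsim in
lemma exists_stopping_prefix {I : List (Fin m)} (hu : prodr r I ≤ u) :
    ∃ A, A <+: I ∧ A ∈ Stopping r u := by
  classical
  have hex : ∃ n, prodr r (I.take n) ≤ u := ⟨I.length, by simpa [List.take_length] using hu⟩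
  let n₀ := Nat.find hex
  refine ⟨I.take n₀, List.take_prefix _ _, Nat.find_spec hex, ?_⟩
  intro J hJ hne
  have hlen : J.length < n₀ := by
    have h1 : J.length ≤ (I.take n₀).length := hJ.length_le
    rcases lt_or_eq_of_le h1 with h | h
    · exact lt_of_lt_of_le h (by simp)
    · exfalso; exact hne (hJ.eq_of_length h)
  have hJeq : J = I.take J.length := by
    have := prefix_eq_take hJ
    rwa [List.take_take, min_eq_left hlen.le] at this
  rw [hJeq]
  exact not_le.1 (Nat.find_min hex hlen)

omit hr hsim in
lemma stopping_prefix_mono {A B I : List (Fin m)} (hA : A ∈ Stopping r u)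
    (hB : B ∈ Stopping r v) (hvu : v ≤ u) (hAI : A <+: I) (hBI : B <+: I) :
    A <+: B := by
  rcases List.prefix_or_prefix_of_prefix hAI hBI with h | h
  · exact h
  · rcases eq_or_ne B A with rfl | hne
    · exact List.prefix_refl _
    · exfalso
      have := hA.2 B h hne
      exact absurd (hB.1.trans hvu) (not_le.2 this)

omit hsim in
lemma stopping_finite (hrmax : ∀ i, r i ≤ rmax) (hrmax1 : rmax < 1)
    (ht : 0 < t) : (Stopping r t).Finite := by
  obtain ⟨n, hn⟩ := exists_pow_lt_of_lt_one ht hrmax1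
  apply (List.finite_length_le (Fin m) n).subset
  intro I hI
  simp only [mem_setOf_eq]
  by_contra hlen
  push_neg at hlen
  have h1 : (I.take n) <+: I := List.take_prefix _ _
  have h2 : I.take n ≠ I := by
    intro h; apply_fun List.length at h
    simp only [List.length_take] at h
    omega
  have h3 := hI.2 _ h1 h2
  have h4 : prodr r (I.take n) ≤ rmax ^ n := by
    have := prodr_le_pow r hr hrmax (I.take n)
    rwa [List.length_take, min_eq_left (by omega)] at this
  linarith

variable (K : Set (X d)) (hKattr : K = ⋃ i, f i '' K)

include hKattr

omit hr hsim in
lemma image_f_subset (i : Fin m) : f i '' K ⊆ K := by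
  conv_rhs => rw [hKattr]
  exact subset_iUnion_of_subset i le_rfl

omit hr hsim in
lemma wordMap_image_subset (I : List (Fin m)) : wordMap f I '' K ⊆ K := by
  induction I with
  | nil => simp
  | cons i I ih =>
    rw [wordMap_cons, image_comp]
    exact (image_mono ih).trans (image_f_subset f K hKattr i)

omit hsim in
lemma stopping_cover (hrmax : ∀ i, r i ≤ rmax) (hrmax1 : rmax < 1) (hrmax0 : 0 < rmax)
    (ht : 0 < t) {x : X d} (hx : x ∈ K) :
    ∃ I ∈ Stopping r t, x ∈ wordMap f I '' K := by
  obtain ⟨n, hn⟩ := exists_pow_lt_of_lt_one ht hrmax1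
  have main : ∀ N, ∀ x ∈ K, ∃ I : List (Fin m),
      (∀ J, J <+: I → J ≠ I → t < prodr r J) ∧ x ∈ wordMap f I '' K ∧
      (prodr r I ≤ t ∨ N ≤ I.length) := by
    intro N
    induction N with
    | zero => exact fun x hx => ⟨[], by simp, by simpa using hx, Or.inr (Nat.zero_le _)⟩
    | succ N ih =>
      intro x hx
      obtain ⟨I, hpre, hxI, hcase⟩ := ih x hx
      by_cases hle : prodr r I ≤ t
      · exact ⟨I, hpre, hxI, Or.inl hle⟩
      · rcases hcase with h | hlen
        · exact absurd h hle
        obtain ⟨y, hy, hxy⟩ := hxI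
        rw [hKattr] at hy
        obtain ⟨i, z, hz, hzy⟩ := by simpa using hy
        refine ⟨I ++ [i], ?_, ?_, Or.inr ?_⟩
        · intro J hJ hne
          have hJI : J <+: I ∨ J = I ++ [i] := by
            rcases List.prefix_or_prefix_of_prefix hJ (List.take_prefix I.length (I ++ [i])) with h | h
            · left; simpa [List.take_left] using h
            · have h2 : I <+: J := by simpa [List.take_left] using h
              have h3 := hJ.length_le
              simp only [List.length_append, List.length_cons, List.length_nil] at h3
              have h4 := h2.length_le
              rcases (by omega : J.length = I.length + 1 ∨ J.length = I.length) with h5 | h5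
              · right; exact hJ.eq_of_length (by simp [h5])
              · left
                have e := h2.eq_of_length h5.symm
                rw [e]
          rcases hJI with h | h
          · rcases eq_or_ne J I with rfl | hne'
            · exact not_le.1 hle
            · exact hpre J h hne'
          · exact absurd h hne
        · rw [wordMap_append]
          exact ⟨z, hz, by simp [hzy, hxy]⟩
        · simp; omega
  obtain ⟨I, hpre, hxI, hcase⟩ := main n x hx
  have hle : prodr r I ≤ t := by
    rcases hcase with h | hlen
    · exact h
    · refine le_of_lt ?_
      calc prodr r I ≤ rmax ^ I.length := prodr_le_pow r hr hrmax I
        _ ≤ rmax ^ n := pow_le_pow_of_le_one hrmax0.le hrmax1.le hlen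
        _ < t := hn
  exact ⟨I, ⟨hle, hpre⟩, hxI⟩

omit hKattr

/-- inverse of a word map -/
noncomputable def winv (f : Fin m → X d → X d) (I : List (Fin m)) : X d → X d :=
  Function.invFun (wordMap f I)

/-- the neighbor map `f_I⁻¹ ∘ f_J` -/
noncomputable def nmap (f : Fin m → X d → X d) (I J : List (Fin m)) : X d → X d :=
  winv f I ∘ wordMap f J

include hr hsim

lemma winv_right (I : List (Fin m)) (x : X d) : wordMap f I (winv f I x) = x :=
  Function.rightInverse_invFun (wordMap_surjective f r hr hsim I) x

lemma winv_left (I : List (Fin m)) (x : X d) : winv f I (wordMap f I x) = x :=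
  Function.leftInverse_invFun (wordMap_injective f r hr hsim I) x

lemma nmap_eq (I J : List (Fin m)) : wordMap f I ∘ nmap f I J = wordMap f J := by
  funext x
  simp [nmap, winv_right f r hr hsim]

lemma dist_nmap (I J : List (Fin m)) (x y : X d) :
    dist (nmap f I J x) (nmap f I J y) = (prodr r J / prodr r I) * dist x y := by
  have h1 : prodr r I * dist (nmap f I J x) (nmap f I J y) = prodr r J * dist x y := by
    rw [← dist_wordMap f r hsim I, ← dist_wordMap f r hsim J]
    have h2 := congrFun (nmap_eq f r hr hsim I J)
    simp only [Function.comp_apply] at h2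
    rw [h2 x, h2 y]
  field_simp [(prodr_pos r hr I).ne']
  linarith [h1]

lemma nmap_continuous (I J : List (Fin m)) : Continuous (nmap f I J) := by
  have : LipschitzWith (Real.toNNReal (prodr r J / prodr r I)) (nmap f I J) := by
    apply LipschitzWith.of_dist_le_mul
    intro x y
    rw [dist_nmap f r hr hsim I J,
      Real.coe_toNNReal _ (div_nonneg (prodr_pos r hr J).le (prodr_pos r hr I).le)]
  exact this.continuous

lemma piece_inter (I J : List (Fin m)) :
    wordMap f I '' (K ∩ nmap f I J '' K) = (wordMap f I '' K) ∩ (wordMap f J '' K) := by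
  ext z
  constructor
  · rintro ⟨a, ⟨haK, b, hbK, hba⟩, rfl⟩
    refine ⟨⟨a, haK, rfl⟩, ⟨b, hbK, ?_⟩⟩
    rw [← hba]
    simp [nmap, winv_right f r hr hsim]
  · rintro ⟨⟨a, haK, hae⟩, ⟨b, hbK, hbe⟩⟩
    refine ⟨a, ⟨haK, b, hbK, ?_⟩, hae⟩
    show winv f I (wordMap f J b) = a
    rw [hbe, ← hae, winv_left f r hr hsim]

lemma inter_nmap_finite {I J : List (Fin m)}
    (hfin2 : ((wordMap f I '' K) ∩ (wordMap f J '' K)).Finite) :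
    (K ∩ nmap f I J '' K).Finite := by
  rw [← piece_inter f r hr hsim K I J] at hfin2
  exact hfin2.of_finite_image ((wordMap_injective f r hr hsim I).injOn)

omit hr hsim

variable {rmin : ℝ}

include hr hsim

/-- distinct stopping words yield pieces with finite intersection -/
lemma stopping_inter_finite (hKattr : K = ⋃ i, f i '' K)
    (hfin : ∀ i j : Fin m, i < j → (f i '' K ∩ f j '' K).Finite)
    {I J : List (Fin m)} (hI : I ∈ Stopping r t) (hJ : J ∈ Stopping r t)
    (hne : I ≠ J) : ((wordMap f I '' K) ∩ (wordMap f J '' K)).Finite := by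
  have hnp1 : ¬ I <+: J := fun h => hne (stopping_antichain r hI hJ h)
  have hnp2 : ¬ J <+: I := fun h => hne.symm (stopping_antichain r hJ hI h)
  obtain ⟨W, i, j, I', J', hij, rfl, rfl⟩ := list_split hnp1 hnp2
  have hiK : wordMap f (W ++ i :: I') '' K ⊆ wordMap f W '' (f i '' K) := by
    have : wordMap f (W ++ i :: I') = wordMap f W ∘ f i ∘ wordMap f I' := by
      rw [wordMap_append]; rfl
    rw [this]
    intro z hz
    obtain ⟨a, ha, rfl⟩ := hz
    exact ⟨f i (wordMap f I' a), ⟨wordMap f I' a,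
      wordMap_image_subset f K hKattr I' ⟨a, ha, rfl⟩, rfl⟩, rfl⟩
  have hjK : wordMap f (W ++ j :: J') '' K ⊆ wordMap f W '' (f j '' K) := by
    have : wordMap f (W ++ j :: J') = wordMap f W ∘ f j ∘ wordMap f J' := by
      rw [wordMap_append]; rfl
    rw [this]
    intro z hz
    obtain ⟨a, ha, rfl⟩ := hz
    exact ⟨f j (wordMap f J' a), ⟨wordMap f J' a,
      wordMap_image_subset f K hKattr J' ⟨a, ha, rfl⟩, rfl⟩, rfl⟩
  have hsub : (wordMap f (W ++ i :: I') '' K) ∩ (wordMap f (W ++ j :: J') '' K) ⊆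
      wordMap f W '' ((f i '' K) ∩ (f j '' K)) := by
    rw [Set.image_inter (wordMap_injective f r hr hsim W)]
    exact inter_subset_inter hiK hjK
  have hfinij : ((f i '' K) ∩ (f j '' K)).Finite := by
    rcases lt_or_gt_of_ne hij with h | h
    · exact hfin i j h
    · rw [inter_comm]; exact hfin j i h
  exact (hfinij.image _).subset hsub

/-- distinct intersecting stopping pieces give a neighbor map in `N₀` -/
lemma nmap_mem_N0 (hKcl : IsClosed K)
    (hKattr : K = ⋃ i, f i '' K)
    (hfin : ∀ i j : Fin m, i < j → (f i '' K ∩ f j '' K).Finite)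
    (hKinf : K.Infinite)
    (hrmin0 : 0 < rmin) (hrminle : ∀ i, rmin ≤ r i) (hrmin1 : rmin < 1)
    (ht : 0 < t) (ht1 : t ≤ 1)
    {I J : List (Fin m)} (hI : I ∈ Stopping r t) (hJ : J ∈ Stopping r t) (hne : I ≠ J)
    (hint : ((wordMap f I '' K) ∩ (wordMap f J '' K)).Nonempty) :
    nmap f I J ∈ NeighborSet f rmin K 0 ∧ (K ∩ nmap f I J '' K).Finite := by
  have hfinIJ := stopping_inter_finite f r hr hsim K hKattr hfin hI hJ hne
  have hKfin := inter_nmap_finite f r hr hsim K (I := I) (J := J) hfinIJ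
  refine ⟨⟨⟨I, J, nmap_eq f r hr hsim I J⟩, ?_, ?_, ?_⟩, hKfin⟩
  · -- nmap ≠ id
    intro hid
    have : wordMap f I = wordMap f J := by
      rw [← nmap_eq f r hr hsim I J, hid]; rfl
    rw [← this] at hfinIJ
    simp only [inter_self] at hfinIJ
    exact (hKinf.image ((wordMap_injective f r hr hsim I).injOn)) hfinIJ
  · refine ⟨prodr r J / prodr r I, ?_, ?_, fun x y => dist_nmap f r hr hsim I J x y⟩
    · have h1 : t * rmin < prodr r J := stopping_lb r hr hrmin0 hrminle hrmin1 ht.le ht1 hJ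
      have h2 : prodr r I ≤ t := hI.1
      rw [le_div_iff₀ (prodr_pos r hr I)]
      calc rmin * prodr r I ≤ rmin * t := by
            apply mul_le_mul_of_nonneg_left h2 hrmin0.le
        _ = t * rmin := mul_comm _ _
        _ ≤ prodr r J := h1.le
    · have h1 : t * rmin < prodr r I := stopping_lb r hr hrmin0 hrminle hrmin1 ht.le ht1 hI
      have h2 : prodr r J ≤ t := hJ.1
      rw [div_le_iff₀ (prodr_pos r hr I)]
      have h3 : prodr r J * rmin ≤ prodr r I := by
        calc prodr r J * rmin ≤ t * rmin := mul_le_mul_of_nonneg_right h2 hrmin0.le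
          _ ≤ prodr r I := h1.le
      calc prodr r J = (prodr r J * rmin) * rmin⁻¹ := by field_simp
        _ ≤ prodr r I * rmin⁻¹ := by
            apply mul_le_mul_of_nonneg_right h3 (by positivity)
        _ = rmin⁻¹ * prodr r I := mul_comm _ _
  · obtain ⟨z, ⟨a, haK, hae⟩, ⟨b, hbK, hbe⟩⟩ := hint
    rw [Metric.cthickening_zero, hKcl.closure_eq]
    refine ⟨a, haK, b, hbK, ?_⟩
    show winv f I (wordMap f J b) = a
    rw [hbe, ← hae, winv_left f r hr hsim]

omit hr hsim

lemma compact_sep {A B : Set (X d)} (hA : IsCompact A) (hB : IsCompact B)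
    (hAB : Disjoint A B) : ∃ ε > 0, ∀ x ∈ A, ∀ y ∈ B, ε ≤ dist x y := by
  obtain ⟨δ, hδ, hdisj⟩ := hAB.exists_thickenings hA hB.isClosed
  refine ⟨δ, hδ, fun x hx y hy => ?_⟩
  by_contra hlt
  push_neg at hlt
  have h1 : y ∈ Metric.thickening δ A := by
    rw [Metric.mem_thickening_iff]
    exact ⟨x, hx, by rwa [dist_comm]⟩
  have h2 : y ∈ Metric.thickening δ B := Metric.self_subset_thickening hδ B hy
  exact (hdisj.ne_of_mem h1 h2) rfl

lemma finite_min {α : Type*} {S : Set α} (hS : S.Finite) (g : α → ℝ)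
    (hg : ∀ a, 0 < g a) : ∃ c > 0, ∀ a ∈ S, c ≤ g a := by
  classical
  rcases S.eq_empty_or_nonempty with rfl | hne
  · exact ⟨1, one_pos, by simp⟩
  · have hFne : (hS.toFinset.image g).Nonempty := by
      rw [Finset.image_nonempty, Set.Finite.toFinset_nonempty]; exact hne
    refine ⟨(hS.toFinset.image g).min' hFne, ?_, fun a ha => ?_⟩
    · obtain ⟨a, _, heq⟩ := Finset.mem_image.1 ((hS.toFinset.image g).min'_mem hFne)
      rw [← heq]; exact hg a
    · exact Finset.min'_le _ _ (Finset.mem_image.2 ⟨a, hS.mem_toFinset.2 ha, rfl⟩)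

include hr hsim

lemma piece_nesting (hKattr : K = ⋃ i, f i '' K) {A I : List (Fin m)}
    (h : A <+: I) : wordMap f I '' K ⊆ wordMap f A '' K := by
  obtain ⟨L, rfl⟩ := h
  rw [wordMap_append, image_comp]
  exact image_mono (wordMap_image_subset f K hKattr L)

lemma K_infinite (hKc : IsCompact K) (hKattr : K = ⋃ i, f i '' K)
    (hrmax : ∀ i, r i ≤ rmax) (hrmax0 : 0 < rmax) (hrmax1 : rmax < 1)
    (hD : 0 < Metric.diam K) : K.Infinite := by
  have hKne : K.Nonempty := by
    by_contra h
    rw [not_nonempty_iff_eq_empty] at h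
    rw [h] at hD; simp at hD
  obtain ⟨xx, hxx, yy, hyy, hxy⟩ : ∃ x ∈ K, ∃ y ∈ K, 0 < dist x y := by
    by_contra hcon
    push_neg at hcon
    have : Metric.diam K ≤ 0 := Metric.diam_le_of_forall_dist_le le_rfl
      (fun x hx y hy => hcon x hx y hy)
    linarith
  intro hfin
  have hclosed : IsClosed (K \ {xx}) := (hfin.subset diff_subset).isClosed
  have hnotin : xx ∉ K \ {xx} := by simp
  apply hnotin
  rw [← hclosed.closure_eq]
  rw [Metric.mem_closure_iff]
  intro ε hε
  set t : ℝ := min 1 (ε / (2 * (Metric.diam K + 1))) with hts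
  have hDpos : 0 < Metric.diam K + 1 := by linarith
  have ht : 0 < t := lt_min one_pos (by positivity)
  obtain ⟨I, hI, hxI⟩ := stopping_cover f r hr K hKattr hrmax hrmax1 hrmax0 ht hxx
  obtain ⟨a, haK, hax⟩ := hxI
  have hdistsmall : ∀ b ∈ K, dist xx (wordMap f I b) < ε := by
    intro b hb
    rw [← hax, dist_wordMap f r hsim]
    calc prodr r I * dist a b ≤ t * Metric.diam K := by
          apply mul_le_mul hI.1 (Metric.dist_le_diam_of_mem hKc.isBounded haK hb)
            dist_nonneg (le_trans (prodr_pos r hr I).le hI.1)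
      _ ≤ (ε / (2 * (Metric.diam K + 1))) * Metric.diam K := by
          apply mul_le_mul_of_nonneg_right (min_le_right _ _) Metric.diam_nonneg
      _ < ε := by
          rw [div_mul_eq_mul_div, div_lt_iff₀ (by positivity)]
          nlinarith [Metric.diam_nonneg (s := K) (α := X d)]
  have hne2 : wordMap f I xx ≠ wordMap f I yy := by
    intro h
    have := wordMap_injective f r hr hsim I h
    rw [this] at hxy; simp at hxy
  rcases ne_or_eq (wordMap f I xx) xx with h | h
  · exact ⟨wordMap f I xx, ⟨wordMap_image_subset f K hKattr I ⟨xx, hxx, rfl⟩, h⟩,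
      hdistsmall xx hxx⟩
  · refine ⟨wordMap f I yy, ⟨wordMap_image_subset f K hKattr I ⟨yy, hyy, rfl⟩, ?_⟩,
      hdistsmall yy hyy⟩
    rw [← h]; exact hne2.symm

/-- variant: intersecting comparable stopping pieces give a neighbor map (if not id) -/
lemma nmap_mem_N0' (hKcl : IsClosed K)
    (hrmin0 : 0 < rmin) (hrminle : ∀ i, rmin ≤ r i) (hrmin1 : rmin < 1)
    (ht : 0 < t) (ht1 : t ≤ 1)
    {I J : List (Fin m)} (hI : I ∈ Stopping r t) (hJ : J ∈ Stopping r t)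
    (hint : ((wordMap f I '' K) ∩ (wordMap f J '' K)).Nonempty)
    (hneid : nmap f I J ≠ id) :
    nmap f I J ∈ NeighborSet f rmin K 0 := by
  refine ⟨⟨I, J, nmap_eq f r hr hsim I J⟩, hneid, ?_, ?_⟩
  · refine ⟨prodr r J / prodr r I, ?_, ?_, fun x y => dist_nmap f r hr hsim I J x y⟩
    · have h1 : t * rmin < prodr r J := stopping_lb r hr hrmin0 hrminle hrmin1 ht.le ht1 hJ
      have h2 : prodr r I ≤ t := hI.1
      rw [le_div_iff₀ (prodr_pos r hr I)]
      calc rmin * prodr r I ≤ rmin * t := by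
            apply mul_le_mul_of_nonneg_left h2 hrmin0.le
        _ = t * rmin := mul_comm _ _
        _ ≤ prodr r J := h1.le
    · have h1 : t * rmin < prodr r I := stopping_lb r hr hrmin0 hrminle hrmin1 ht.le ht1 hI
      have h2 : prodr r J ≤ t := hJ.1
      rw [div_le_iff₀ (prodr_pos r hr I)]
      have h3 : prodr r J * rmin ≤ prodr r I := by
        calc prodr r J * rmin ≤ t * rmin := mul_le_mul_of_nonneg_right h2 hrmin0.le
          _ ≤ prodr r I := h1.le
      calc prodr r J = (prodr r J * rmin) * rmin⁻¹ := by field_simp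
        _ ≤ prodr r I * rmin⁻¹ := by
            apply mul_le_mul_of_nonneg_right h3 (by positivity)
        _ = rmin⁻¹ * prodr r I := mul_comm _ _
  · obtain ⟨z, ⟨a, haK, hae⟩, ⟨b, hbK, hbe⟩⟩ := hint
    rw [Metric.cthickening_zero, hKcl.closure_eq]
    refine ⟨a, haK, b, hbK, ?_⟩
    show winv f I (wordMap f J b) = a
    rw [hbe, ← hae, winv_left f r hr hsim]

lemma gamma0_exists (hKc : IsCompact K) (hrmin0 : 0 < rmin)
    (hNfin : (NeighborSet f rmin K 0).Finite) (L : ℕ) :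
    ∃ γ₀ > 0, ∀ (a b : List (Fin m)) (h : X d → X d), a.length ≤ L → b.length ≤ L →
      (h ∈ NeighborSet f rmin K 0 ∨ h = id) →
      Disjoint (wordMap f a '' K) (h '' (wordMap f b '' K)) →
      ∀ x ∈ wordMap f a '' K, ∀ y ∈ h '' (wordMap f b '' K), γ₀ ≤ dist x y := by
  classical
  set T : Set ((List (Fin m)) × (X d → X d) × List (Fin m)) :=
    {p | p.1.length ≤ L ∧ (p.2.1 ∈ NeighborSet f rmin K 0 ∨ p.2.1 = id) ∧
      p.2.2.length ≤ L} with hT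
  have hTfin : T.Finite := by
    have hsub : T ⊆ {l : List (Fin m) | l.length ≤ L} ×ˢ
        ((NeighborSet f rmin K 0 ∪ {id}) ×ˢ {l : List (Fin m) | l.length ≤ L}) := by
      rintro ⟨a, h, b⟩ ⟨h1, h2, h3⟩
      refine ⟨h1, ?_, h3⟩
      rcases h2 with h2 | h2
      · exact Or.inl h2
      · exact Or.inr (by simpa using h2)
    exact (((List.finite_length_le (Fin m) L)).prod
      ((hNfin.union (finite_singleton _)).prod (List.finite_length_le (Fin m) L))).subset hsub
  have key : ∀ p : (List (Fin m)) × (X d → X d) × List (Fin m), ∃ ε, 0 < ε ∧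
      ((p ∈ T ∧ Disjoint (wordMap f p.1 '' K) (p.2.1 '' (wordMap f p.2.2 '' K))) →
        ∀ x ∈ wordMap f p.1 '' K, ∀ y ∈ p.2.1 '' (wordMap f p.2.2 '' K), ε ≤ dist x y) := by
    intro p
    by_cases hp : p ∈ T ∧ Disjoint (wordMap f p.1 '' K) (p.2.1 '' (wordMap f p.2.2 '' K))
    · have hcont : Continuous p.2.1 := by
        rcases hp.1.2.1 with hmem | hid
        · obtain ⟨_, _, ⟨ρ, hρ1, _, hρ⟩, _⟩ := hmem
          have : LipschitzWith (Real.toNNReal ρ) p.2.1 := by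
            apply LipschitzWith.of_dist_le_mul
            intro x y
            rw [hρ x y, Real.coe_toNNReal _ (le_trans hrmin0.le hρ1)]
          exact this.continuous
        · rw [hid]; exact continuous_id
      obtain ⟨ε, hεpos, hsep⟩ := compact_sep
        (hKc.image (wordMap_continuous f r hr hsim p.1))
        ((hKc.image (wordMap_continuous f r hr hsim p.2.2)).image hcont) hp.2
      exact ⟨ε, hεpos, fun _ => hsep⟩
    · exact ⟨1, one_pos, fun hcon => absurd hcon hp⟩
  choose ε hεpos hεsep using key
  obtain ⟨γ₀, hγpos, hγmin⟩ := finite_min hTfin ε hεpos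
  refine ⟨γ₀, hγpos, ?_⟩
  intro a b h ha hb hmem hdisj x hx y hy
  have hpT : (a, h, b) ∈ T := ⟨ha, hmem, hb⟩
  calc γ₀ ≤ ε (a, h, b) := hγmin _ hpT
    _ ≤ dist x y := hεsep (a, h, b) ⟨hpT, hdisj⟩ x hx y hy

/-- Key separation lemma: disjoint comparable stopping pieces are uniformly separated. -/
lemma disjoint_pieces_sep (hKc : IsCompact K) (hKne : K.Nonempty) (hKcl : IsClosed K)
    (hKattr : K = ⋃ i, f i '' K)
    (hrmin0 : 0 < rmin) (hrminle : ∀ i, rmin ≤ r i) (hrmin1 : rmin < 1)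
    (hrmax : ∀ i, r i ≤ rmax) (hrmax0 : 0 < rmax) (hrmax1 : rmax < 1)
    (hNfin : (NeighborSet f rmin K 0).Finite) :
    ∃ γ > 0, ∀ t, 0 < t → t ≤ 1 → ∀ I ∈ Stopping r t, ∀ J ∈ Stopping r t,
      Disjoint (wordMap f I '' K) (wordMap f J '' K) →
      ∀ x ∈ wordMap f I '' K, ∀ y ∈ wordMap f J '' K, γ * rmin * t ≤ dist x y := by
  classical
  obtain ⟨L, hL⟩ := exists_pow_lt_of_lt_one (by positivity : (0:ℝ) < rmin * rmin) hrmax1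
  obtain ⟨γ₀, hγ₀pos, hγ₀⟩ := gamma0_exists f r hr hsim K (rmin := rmin) hKc hrmin0 hNfin L
  have hlen_le : ∀ {c : List (Fin m)}, rmin * rmin < prodr r c → c.length ≤ L := by
    intro c hc
    by_contra hlen
    push_neg at hlen
    have h1 : prodr r c ≤ rmax ^ c.length := prodr_le_pow r hr hrmax c
    have h2 : rmax ^ c.length ≤ rmax ^ L :=
      pow_le_pow_of_le_one hrmax0.le hrmax1.le hlen.le
    linarith
  -- the bridge step
  have bridge : ∀ (u : ℝ) (A B A' B' : List (Fin m)), 0 < u → u ≤ 1 →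
      A ∈ Stopping r u → B ∈ Stopping r u → A <+: A' → B <+: B' →
      ¬ Disjoint (wordMap f A '' K) (wordMap f B '' K) →
      Disjoint (wordMap f A' '' K) (wordMap f B' '' K) →
      rmin * rmin * prodr r A < prodr r A' →
      rmin * rmin * prodr r B < prodr r B' →
      ∀ x ∈ wordMap f A' '' K, ∀ y ∈ wordMap f B' '' K,
        γ₀ * prodr r A ≤ dist x y := by
    intro u A B A' B' hu hu1 hA hB hpa hpb hnd hd hra hrb x hx y hy
    obtain ⟨a, haeq⟩ := hpa
    obtain ⟨b, hbeq⟩ := hpb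
    have hApos := prodr_pos r hr A
    have hBpos := prodr_pos r hr B
    have hprodA : prodr r A' = prodr r A * prodr r a := by rw [← haeq, prodr_append]
    have hprodB : prodr r B' = prodr r B * prodr r b := by rw [← hbeq, prodr_append]
    have hra' : rmin * rmin < prodr r a := by
      rw [hprodA] at hra
      have h' : prodr r A * (rmin * rmin) < prodr r A * prodr r a := by nlinarith
      exact (mul_lt_mul_iff_right₀ hApos).1 h'
    have hrb' : rmin * rmin < prodr r b := by
      rw [hprodB] at hrb
      have h' : prodr r B * (rmin * rmin) < prodr r B * prodr r b := by nlinarith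
      exact (mul_lt_mul_iff_right₀ hBpos).1 h'
    set h := nmap f A B with hh
    have hmem : h ∈ NeighborSet f rmin K 0 ∨ h = id := by
      by_cases hid : h = id
      · exact Or.inr hid
      · exact Or.inl (nmap_mem_N0' f r hr hsim K (rmin := rmin) hKcl hrmin0 hrminle hrmin1
          hu hu1 hA hB (Set.not_disjoint_iff_nonempty_inter.1 hnd) hid)
    have hBA : wordMap f B = wordMap f A ∘ h := (nmap_eq f r hr hsim A B).symm
    have e1 : wordMap f A' '' K = wordMap f A '' (wordMap f a '' K) := by
      rw [← haeq, wordMap_append]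
      exact Set.image_comp _ _ _
    have e2 : wordMap f B' '' K = wordMap f A '' (h '' (wordMap f b '' K)) := by
      rw [← hbeq, wordMap_append, hBA]
      rw [show (wordMap f A ∘ h) ∘ wordMap f b = fun z => wordMap f A (h (wordMap f b z)) from rfl]
      ext z
      simp [Set.mem_image]
    have hd2 : Disjoint (wordMap f a '' K) (h '' (wordMap f b '' K)) := by
      rw [e1, e2] at hd
      exact ((Set.disjoint_image_iff (wordMap_injective f r hr hsim A))).1 hd
    rw [e1] at hx
    rw [e2] at hy
    obtain ⟨x', hx', rfl⟩ := hx
    obtain ⟨y', hy', rfl⟩ := hy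
    rw [dist_wordMap f r hsim]
    calc γ₀ * prodr r A = prodr r A * γ₀ := mul_comm _ _
      _ ≤ prodr r A * dist x' y' := by
          apply mul_le_mul_of_nonneg_left ?_ hApos.le
          exact hγ₀ a b h (hlen_le hra') (hlen_le hrb') hmem hd2 x' hx' y' hy'
  -- the ascending chain
  refine ⟨γ₀, hγ₀pos, ?_⟩
  intro t ht ht1 I hI J hJ hdisj x hx y hy
  obtain hex2 := exists_pow_lt_of_lt_one ht hrmin1
  set kst := Nat.find hex2 with hkstdef
  have hkst : rmin ^ kst < t := Nat.find_spec hex2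
  have hkst1 : 1 ≤ kst := by
    rcases Nat.eq_zero_or_pos kst with h0 | h
    · exfalso; rw [h0, pow_zero] at hkst; linarith
    · exact h
  set ks := kst - 1 with hksdef
  have hkseq : kst = ks + 1 := by omega
  have hks : t ≤ rmin ^ ks := not_lt.1 (Nat.find_min hex2 (by omega))
  have hlevel : ∀ k, k ≤ ks → t ≤ rmin ^ k := fun k hk =>
    le_trans hks (pow_le_pow_of_le_one hrmin0.le hrmin1.le hk)
  have hprefI : ∀ k, ∃ A, (t ≤ rmin ^ k → (A <+: I ∧ A ∈ Stopping r (rmin ^ k))) := by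
    intro k
    by_cases hk : t ≤ rmin ^ k
    · obtain ⟨A, h1, h2⟩ := exists_stopping_prefix r (le_trans hI.1 hk)
      exact ⟨A, fun _ => ⟨h1, h2⟩⟩
    · exact ⟨[], fun hcon => absurd hcon hk⟩
  have hprefJ : ∀ k, ∃ B, (t ≤ rmin ^ k → (B <+: J ∧ B ∈ Stopping r (rmin ^ k))) := by
    intro k
    by_cases hk : t ≤ rmin ^ k
    · obtain ⟨B, h1, h2⟩ := exists_stopping_prefix r (le_trans hJ.1 hk)
      exact ⟨B, fun _ => ⟨h1, h2⟩⟩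
    · exact ⟨[], fun hcon => absurd hcon hk⟩
  choose Af hAf using hprefI
  choose Bf hBf using hprefJ
  have hupos : ∀ k : ℕ, (0:ℝ) < rmin ^ k := fun k => by positivity
  have hule : ∀ k : ℕ, (rmin:ℝ) ^ k ≤ 1 := fun k => pow_le_one₀ hrmin0.le hrmin1.le
  -- the two cases
  by_cases hexd : ∃ k, k ≤ ks ∧ Disjoint (wordMap f (Af k) '' K) (wordMap f (Bf k) '' K)
  · set j := Nat.find hexd with hjdef
    obtain ⟨hjks, hjd⟩ := Nat.find_spec hexd
    have hj1 : 1 ≤ j := by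
      rcases Nat.eq_zero_or_pos j with h0 | h
      · exfalso
        have hmem0 := Nat.find_spec hexd
        rw [← hjdef, h0] at hmem0
        have hA0 : Af 0 ∈ Stopping r (rmin ^ 0) := (hAf 0 (by rw [pow_zero]; exact ht1)).2
        have hB0 : Bf 0 ∈ Stopping r (rmin ^ 0) := (hBf 0 (by rw [pow_zero]; exact ht1)).2
        rw [pow_zero] at hA0 hB0
        have hAnil : Af 0 = [] := by
          by_contra hne
          have := hA0.2 [] (List.nil_prefix) (fun hc => hne hc.symm)
          simp at this
        have hBnil : Bf 0 = [] := by
          by_contra hne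
          have := hB0.2 [] (List.nil_prefix) (fun hc => hne hc.symm)
          simp at this
        rw [hAnil, hBnil] at hmem0
        simp only [wordMap_nil, image_id] at hmem0
        exact absurd (disjoint_self.1 hmem0.2) (nonempty_iff_ne_empty.1 hKne)
      · exact h
    obtain ⟨jm, hjm⟩ : ∃ jm, j = jm + 1 := ⟨j - 1, by omega⟩
    have hjmks : jm ≤ ks := by omega
    have hjks' : j ≤ ks := hjks
    have hAjm := hAf jm (hlevel jm hjmks)
    have hBjm := hBf jm (hlevel jm hjmks)
    have hAj := hAf j (hlevel j hjks')
    have hBj := hBf j (hlevel j hjks')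
    have hnd : ¬ Disjoint (wordMap f (Af jm) '' K) (wordMap f (Bf jm) '' K) := by
      intro hcon
      have := Nat.find_min hexd (show jm < j by omega)
      exact this ⟨by omega, hcon⟩
    have hpa : Af jm <+: Af j :=
      stopping_prefix_mono r hAjm.2 hAj.2
        (pow_le_pow_of_le_one hrmin0.le hrmin1.le (by omega)) hAjm.1 hAj.1
    have hpb : Bf jm <+: Bf j :=
      stopping_prefix_mono r hBjm.2 hBj.2
        (pow_le_pow_of_le_one hrmin0.le hrmin1.le (by omega)) hBjm.1 hBj.1
    have hra : rmin * rmin * prodr r (Af jm) < prodr r (Af j) := by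
      have h1 : prodr r (Af jm) ≤ rmin ^ jm := hAjm.2.1
      have h2 : rmin ^ j * rmin < prodr r (Af j) :=
        stopping_lb r hr hrmin0 hrminle hrmin1 (hupos j).le (hule j) hAj.2
      have : rmin * rmin * prodr r (Af jm) ≤ rmin ^ j * rmin := by
        rw [hjm, pow_succ]
        nlinarith [hupos jm]
      linarith
    have hrb : rmin * rmin * prodr r (Bf jm) < prodr r (Bf j) := by
      have h1 : prodr r (Bf jm) ≤ rmin ^ jm := hBjm.2.1
      have h2 : rmin ^ j * rmin < prodr r (Bf j) :=
        stopping_lb r hr hrmin0 hrminle hrmin1 (hupos j).le (hule j) hBj.2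
      have : rmin * rmin * prodr r (Bf jm) ≤ rmin ^ j * rmin := by
        rw [hjm, pow_succ]
        nlinarith [hupos jm]
      linarith
    have hxin : x ∈ wordMap f (Af j) '' K :=
      piece_nesting f r hr hsim K hKattr hAj.1 hx
    have hyin : y ∈ wordMap f (Bf j) '' K :=
      piece_nesting f r hr hsim K hKattr hBj.1 hy
    have hres := bridge (rmin ^ jm) (Af jm) (Bf jm) (Af j) (Bf j) (hupos jm) (hule jm)
      hAjm.2 hBjm.2 hpa hpb hnd hjd hra hrb x hxin y hyin
    have hplb : t * rmin ≤ prodr r (Af jm) := by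
      have := stopping_lb r hr hrmin0 hrminle hrmin1 (hupos jm).le (hule jm) hAjm.2
      calc t * rmin ≤ rmin ^ jm * rmin := by
            apply mul_le_mul_of_nonneg_right (hlevel jm hjmks) hrmin0.le
        _ ≤ prodr r (Af jm) := this.le
    calc γ₀ * rmin * t = γ₀ * (t * rmin) := by ring
      _ ≤ γ₀ * prodr r (Af jm) := by
          apply mul_le_mul_of_nonneg_left hplb hγ₀pos.le
      _ ≤ dist x y := hres
  · push_neg at hexd
    have hnd : ¬ Disjoint (wordMap f (Af ks) '' K) (wordMap f (Bf ks) '' K) :=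
      hexd ks le_rfl
    have hAks := hAf ks (hlevel ks le_rfl)
    have hBks := hBf ks (hlevel ks le_rfl)
    have hra : rmin * rmin * prodr r (Af ks) < prodr r I := by
      have h1 : prodr r (Af ks) ≤ rmin ^ ks := hAks.2.1
      have h2 : t * rmin < prodr r I :=
        stopping_lb r hr hrmin0 hrminle hrmin1 ht.le ht1 hI
      have h3 : rmin ^ kst < t := hkst
      have : rmin * rmin * prodr r (Af ks) ≤ rmin ^ kst * rmin := by
        rw [hkseq, pow_succ]
        nlinarith [hupos ks]
      have h4 : rmin ^ kst * rmin < t * rmin := by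
        apply mul_lt_mul_of_pos_right h3 hrmin0
      linarith
    have hrb : rmin * rmin * prodr r (Bf ks) < prodr r J := by
      have h1 : prodr r (Bf ks) ≤ rmin ^ ks := hBks.2.1
      have h2 : t * rmin < prodr r J :=
        stopping_lb r hr hrmin0 hrminle hrmin1 ht.le ht1 hJ
      have h3 : rmin ^ kst < t := hkst
      have : rmin * rmin * prodr r (Bf ks) ≤ rmin ^ kst * rmin := by
        rw [hkseq, pow_succ]
        nlinarith [hupos ks]
      have h4 : rmin ^ kst * rmin < t * rmin := by
        apply mul_lt_mul_of_pos_right h3 hrmin0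
      linarith
    have hres := bridge (rmin ^ ks) (Af ks) (Bf ks) I J (hupos ks) (hule ks)
      hAks.2 hBks.2 hAks.1 hBks.1 hnd hdisj hra hrb x hx y hy
    have hplb : t * rmin ≤ prodr r (Af ks) := by
      have := stopping_lb r hr hrmin0 hrminle hrmin1 (hupos ks).le (hule ks) hAks.2
      calc t * rmin ≤ rmin ^ ks * rmin := by
            apply mul_le_mul_of_nonneg_right hks hrmin0.le
        _ ≤ prodr r (Af ks) := this.le
    calc γ₀ * rmin * t = γ₀ * (t * rmin) := by ring
      _ ≤ γ₀ * prodr r (Af ks) := by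
          apply mul_le_mul_of_nonneg_left hplb hγ₀pos.le
      _ ≤ dist x y := hres

/-- The (finite) set of possible junction points in `K`-coordinates. -/
def Gset (f : Fin m → X d → X d) (rmin : ℝ) (K : Set (X d)) : Set (X d) :=
  ⋃₀ { S | ∃ h ∈ NeighborSet f rmin K 0, (K ∩ h '' K).Finite ∧ S = K ∩ h '' K }

omit hr hsim

lemma Gset_finite (hNfin : (NeighborSet f rmin K 0).Finite) :
    (Gset f rmin K).Finite := by
  apply Set.Finite.sUnion
  · apply Set.Finite.subset (hNfin.image (fun h => K ∩ h '' K))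
    rintro S ⟨h, hmem, _, rfl⟩
    exact mem_image_of_mem _ hmem
  · rintro S ⟨h, _, hfin, rfl⟩
    exact hfin

include hr hsim

lemma junction_pull (hKcl : IsClosed K) (hKattr : K = ⋃ i, f i '' K)
    (hfin : ∀ i j : Fin m, i < j → (f i '' K ∩ f j '' K).Finite)
    (hKinf : K.Infinite)
    (hrmin0 : 0 < rmin) (hrminle : ∀ i, rmin ≤ r i) (hrmin1 : rmin < 1)
    (ht : 0 < t) (ht1 : t ≤ 1)
    {I J : List (Fin m)} (hI : I ∈ Stopping r t) (hJ : J ∈ Stopping r t) (hne : I ≠ J)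
    {z : X d} (hz : z ∈ (wordMap f I '' K) ∩ (wordMap f J '' K)) :
    z = wordMap f I (winv f I z) ∧ winv f I z ∈ Gset f rmin K ∧ winv f I z ∈ K := by
  obtain ⟨hN, hNfin'⟩ := nmap_mem_N0 f r hr hsim K (rmin := rmin) hKcl hKattr hfin hKinf
    hrmin0 hrminle hrmin1 ht ht1 hI hJ hne ⟨z, hz⟩
  obtain ⟨⟨a, haK, hae⟩, ⟨b, hbK, hbe⟩⟩ := hz
  have hwa : winv f I z = a := by rw [← hae, winv_left f r hr hsim]
  have hmem : a ∈ K ∩ nmap f I J '' K := by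
    refine ⟨haK, b, hbK, ?_⟩
    show winv f I (wordMap f J b) = a
    rw [hbe, ← hae, winv_left f r hr hsim]
  refine ⟨?_, ?_, by rw [hwa]; exact haK⟩
  · rw [hwa, hae]
  · rw [hwa]
    exact ⟨K ∩ nmap f I J '' K, ⟨nmap f I J, hN, hNfin', rfl⟩, hmem⟩

omit hr hsim

lemma junction_sep (hGfin : (Gset f rmin K).Finite)
    (hNfin : (NeighborSet f rmin K 0).Finite) :
    ∃ δ₂ > 0, ∀ u ∈ Gset f rmin K, ∀ w ∈ Gset f rmin K, ∀ h : X d → X d,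
      (h ∈ NeighborSet f rmin K 0 ∨ h = id) → u ≠ h w → δ₂ ≤ dist u (h w) := by
  classical
  set T : Set (X d × (X d → X d) × X d) :=
    (Gset f rmin K) ×ˢ ((NeighborSet f rmin K 0 ∪ {id}) ×ˢ (Gset f rmin K)) with hT
  have hTfin : T.Finite :=
    hGfin.prod ((hNfin.union (finite_singleton _)).prod hGfin)
  have key : ∀ p : X d × (X d → X d) × X d, ∃ ε, 0 < ε ∧
      (p.1 ≠ p.2.1 p.2.2 → ε ≤ dist p.1 (p.2.1 p.2.2)) := by
    intro p
    by_cases hp : p.1 = p.2.1 p.2.2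
    · exact ⟨1, one_pos, fun hcon => absurd hp hcon⟩
    · exact ⟨dist p.1 (p.2.1 p.2.2), dist_pos.2 hp, fun _ => le_rfl⟩
  choose ε hεpos hεle using key
  obtain ⟨δ₂, hδ₂pos, hδ₂⟩ := finite_min hTfin ε hεpos
  refine ⟨δ₂, hδ₂pos, fun u hu w hw h hmem hne => ?_⟩
  have hpT : (u, h, w) ∈ T := by
    refine ⟨hu, ?_, hw⟩
    rcases hmem with h1 | h1
    · exact Or.inl h1
    · exact Or.inr (by simpa using h1)
  calc δ₂ ≤ ε (u, h, w) := hδ₂ _ hpT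
    _ ≤ dist u (h w) := hεle _ hne

lemma trimmed_sep (hKc : IsCompact K) (hrmin0 : 0 < rmin)
    (hNfin : (NeighborSet f rmin K 0).Finite) {η : ℝ} (hη : 0 < η) :
    ∃ ψ₀ > 0, ∀ h ∈ NeighborSet f rmin K 0, ∀ x ∈ K, ∀ y ∈ h '' K,
      (∀ p ∈ K ∩ h '' K, η ≤ dist x p) → (∀ p ∈ K ∩ h '' K, η ≤ dist y p) →
      ψ₀ ≤ dist x y := by
  classical
  have key : ∀ h : X d → X d, ∃ ε, 0 < ε ∧ (h ∈ NeighborSet f rmin K 0 →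
      ∀ x ∈ K, ∀ y ∈ h '' K,
      (∀ p ∈ K ∩ h '' K, η ≤ dist x p) → (∀ p ∈ K ∩ h '' K, η ≤ dist y p) →
      ε ≤ dist x y) := by
    intro h
    by_cases hmem : h ∈ NeighborSet f rmin K 0
    · have hcont : Continuous h := by
        obtain ⟨_, _, ⟨ρ, hρ1, _, hρ⟩, _⟩ := hmem
        have : LipschitzWith (Real.toNNReal ρ) h := by
          apply LipschitzWith.of_dist_le_mul
          intro x y
          rw [hρ x y, Real.coe_toNNReal _ (le_trans hrmin0.le hρ1)]
        exact this.continuous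
      set A := {x ∈ K | ∀ p ∈ K ∩ h '' K, η ≤ dist x p} with hA
      set B := {y ∈ h '' K | ∀ p ∈ K ∩ h '' K, η ≤ dist y p} with hB
      have hclosed : IsClosed {x : X d | ∀ p ∈ K ∩ h '' K, η ≤ dist x p} := by
        have : {x : X d | ∀ p ∈ K ∩ h '' K, η ≤ dist x p} =
            ⋂ p ∈ K ∩ h '' K, {x : X d | η ≤ dist x p} := by
          ext x; simp
        rw [this]
        apply isClosed_biInter
        intro p _
        exact isClosed_le continuous_const (Continuous.dist continuous_id continuous_const)
      have hAc : IsCompact A := hKc.inter_right hclosed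
      have hBc : IsCompact B := (hKc.image hcont).inter_right hclosed
      have hdisj : Disjoint A B := by
        rw [Set.disjoint_left]
        rintro z ⟨hzK, hzd⟩ ⟨hzh, _⟩
        have := hzd z ⟨hzK, hzh⟩
        rw [dist_self] at this
        linarith
      obtain ⟨ε, hεpos, hsep⟩ := compact_sep hAc hBc hdisj
      exact ⟨ε, hεpos, fun _ x hx y hy hxd hyd => hsep x ⟨hx, hxd⟩ y ⟨hy, hyd⟩⟩
    · exact ⟨1, one_pos, fun hcon => absurd hcon hmem⟩
  choose ε hεpos hεle using key
  obtain ⟨ψ₀, hψpos, hψ⟩ := finite_min hNfin ε hεpos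
  exact ⟨ψ₀, hψpos, fun h hmem x hx y hy hxd hyd =>
    le_trans (hψ h hmem) (hεle h hmem x hx y hy hxd hyd)⟩

end Aux
end NagataAux

open NagataAux

/-- Let `d ≥ 2` and let `K ⊆ ℝ^d` be the attractor of a self-similar IFS satisfying the
finite type condition and with `f_i(K) ∩ f_j(K)` finite for `i < j`. Then `K` has Nagata
dimension at most `1`: there is `c > 0` such that for every `s > 0` the set `K` has an
`s`-cover `𝒰₀ ∪ 𝒰₁` with each `𝒰_i` being `cs`-separated. -/
theorem nagataDim_le_one_of_finite_type {d m : ℕ} (hd : 2 ≤ d)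
    (f : Fin m → EuclideanSpace ℝ (Fin d) → EuclideanSpace ℝ (Fin d))
    (r : Fin m → ℝ) (hr : ∀ i, 0 < r i ∧ r i < 1)
    (hsim : ∀ i, ∀ x y, dist (f i x) (f i y) = r i * dist x y)
    (K : Set (EuclideanSpace ℝ (Fin d))) (hKne : K.Nonempty) (hKc : IsCompact K)
    (hKattr : K = ⋃ i, f i '' K)
    (rmin : ℝ) (hrmin : IsLeast (Set.range r) rmin)
    (hft : (NeighborSet f rmin K 0).Finite)
    (hfin : ∀ i j : Fin m, i < j → (f i '' K ∩ f j '' K).Finite) :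
    ∃ c : ℝ, 0 < c ∧ ∀ s : ℝ, 0 < s →
      ∃ 𝒰 : Fin 2 → Set (Set (EuclideanSpace ℝ (Fin d))),
        (K ⊆ ⋃ i, ⋃₀ 𝒰 i) ∧
        (∀ i, ∀ U ∈ 𝒰 i, EMetric.diam U ≤ ENNReal.ofReal s) ∧
        (∀ i, ∀ U ∈ 𝒰 i, ∀ V ∈ 𝒰 i, U ≠ V → ∀ p ∈ U, ∀ q ∈ V, c * s ≤ dist p q) := by
  classical
  obtain ⟨⟨i₀, hi₀⟩, hlb⟩ := hrmin
  have hrminle : ∀ i, rmin ≤ r i := fun i => hlb ⟨i, rfl⟩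
  have hrmin0 : 0 < rmin := hi₀ ▸ (hr i₀).1
  have hrmin1 : rmin < 1 := hi₀ ▸ (hr i₀).2
  set rmax : ℝ := Finset.univ.sup' ⟨i₀, Finset.mem_univ i₀⟩ r with hrmaxdef
  have hrmax : ∀ i, r i ≤ rmax := fun i => Finset.le_sup' r (Finset.mem_univ i)
  have hrmax1 : rmax < 1 := by
    rw [hrmaxdef]; refine (Finset.sup'_lt_iff _).2 ?_
    exact fun i _ => (hr i).2
  have hrmax0 : 0 < rmax := lt_of_lt_of_le (hr i₀).1 (hrmax i₀)
  set D := Metric.diam K with hDdef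
  have hDnn : 0 ≤ D := Metric.diam_nonneg
  -- trivial covers when the diameter is at most s
  have htriv : ∀ s : ℝ, 0 < s → D ≤ s → ∀ c : ℝ,
      ∃ 𝒰 : Fin 2 → Set (Set (EuclideanSpace ℝ (Fin d))),
        (K ⊆ ⋃ i, ⋃₀ 𝒰 i) ∧
        (∀ i, ∀ U ∈ 𝒰 i, EMetric.diam U ≤ ENNReal.ofReal s) ∧
        (∀ i, ∀ U ∈ 𝒰 i, ∀ V ∈ 𝒰 i, U ≠ V → ∀ p ∈ U, ∀ q ∈ V, c * s ≤ dist p q) := by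
    intro s hs hDs c
    refine ⟨fun i => if i = 0 then {K} else ∅, ?_, ?_, ?_⟩
    · intro x hx
      refine mem_iUnion.2 ⟨0, ?_⟩
      simp only [if_pos rfl]
      exact ⟨K, mem_singleton _, hx⟩
    · intro i U hU
      rcases eq_or_ne i 0 with rfl | hi
      · simp only [if_pos rfl, mem_singleton_iff] at hU
        subst hU
        apply EMetric.diam_le
        intro x hx y hy
        rw [edist_dist]
        exact ENNReal.ofReal_le_ofReal
          (le_trans (Metric.dist_le_diam_of_mem hKc.isBounded hx hy) hDs)
      · simp [if_neg hi] at hU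
    · intro i U hU V hV hUV
      rcases eq_or_ne i 0 with rfl | hi
      · simp only [if_pos rfl, mem_singleton_iff] at hU hV
        exact absurd (hU.trans hV.symm) hUV
      · simp [if_neg hi] at hU
  by_cases hD : D ≤ 0
  · -- degenerate case: K is a single point
    refine ⟨1, one_pos, fun s hs => htriv s hs (le_trans hD hs.le) 1⟩
  push_neg at hD
  have hKcl : IsClosed K := hKc.isClosed
  have hKinf : K.Infinite := K_infinite f r hr hsim K hKc hKattr hrmax hrmax0 hrmax1 hD
  obtain ⟨γ, hγpos, hγ⟩ := disjoint_pieces_sep f r hr hsim K (rmin := rmin) (rmax := rmax)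
    hKc hKne hKcl hKattr hrmin0 hrminle hrmin1 hrmax hrmax0 hrmax1 hft
  obtain ⟨δ₂, hδ₂pos, hδ₂⟩ := junction_sep f K (rmin := rmin)
    (Gset_finite f K (rmin := rmin) hft) hft
  set δ₃ : ℝ := min (γ * rmin) (rmin * δ₂) with hδ₃def
  have hδ₃pos : 0 < δ₃ := lt_min (by positivity) (by positivity)
  set β : ℝ := min (δ₃ / 4) (D / 2) with hβdef
  have hβpos : 0 < β := lt_min (by positivity) (by positivity)
  obtain ⟨ψ₀, hψ₀pos, hψ₀⟩ := trimmed_sep f (rmin := rmin) (K := K) hKc hrmin0 hft hβpos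
  set c : ℝ := min (min (δ₃ / (2 * D)) (γ * rmin / D)) (rmin * ψ₀ / D) with hcdef
  have hcpos : 0 < c := lt_min (lt_min (by positivity) (by positivity)) (by positivity)
  refine ⟨c, hcpos, ?_⟩
  intro s hs
  by_cases hsD : D ≤ s
  · exact htriv s hs hsD c
  push_neg at hsD
  set t : ℝ := s / D with htdef
  have ht : 0 < t := by positivity
  have ht1 : t ≤ 1 := by
    rw [htdef, div_le_one hD]
    exact hsD.le
  have htD : t * D = s := by
    rw [htdef]; field_simp
  set Pc : List (Fin m) → Set (EuclideanSpace ℝ (Fin d)) := fun I => wordMap f I '' K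
    with hPcdef
  set 𝒥 : Set (EuclideanSpace ℝ (Fin d)) :=
    {z | ∃ I ∈ Stopping r t, ∃ J ∈ Stopping r t, I ≠ J ∧ z ∈ Pc I ∧ z ∈ Pc J} with h𝒥def
  -- junction points are uniformly separated
  have hjsep : ∀ p ∈ 𝒥, ∀ q ∈ 𝒥, p ≠ q → δ₃ * t ≤ dist p q := by
    rintro p ⟨I, hI, J, hJ, hIJ, hpI, hpJ⟩ q ⟨L, hL, M, hM, hLM, hqL, hqM⟩ hpq
    by_cases hdisj : Disjoint (Pc I) (Pc L)
    · calc δ₃ * t ≤ γ * rmin * t :=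
            mul_le_mul_of_nonneg_right (min_le_left _ _) ht.le
        _ ≤ dist p q := hγ t ht ht1 I hI L hL hdisj p hpI q hqL
    · obtain ⟨hpEq, hpG, hpK⟩ := junction_pull f r hr hsim K (rmin := rmin) hKcl hKattr hfin
        hKinf hrmin0 hrminle hrmin1 ht ht1 hI hJ hIJ ⟨hpI, hpJ⟩
      obtain ⟨hqEq, hqG, hqK⟩ := junction_pull f r hr hsim K (rmin := rmin) hKcl hKattr hfin
        hKinf hrmin0 hrminle hrmin1 ht ht1 hL hM hLM ⟨hqL, hqM⟩
      set u := winv f I p with hudef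
      set w := winv f L q with hwdef
      have hprodI : t * rmin < prodr r I :=
        stopping_lb r hr hrmin0 hrminle hrmin1 ht.le ht1 hI
      by_cases hIL : I = L
      · subst hIL
        have huw : u ≠ w := by
          intro h
          apply hpq
          rw [hpEq, hqEq, h]
        have hd : dist p q = prodr r I * dist u w := by
          conv_lhs => rw [hpEq, hqEq]
          exact dist_wordMap f r hsim I u w
        have hsep := hδ₂ u hpG w hqG id (Or.inr rfl) (by simpa using huw)
        simp only [id_eq] at hsep
        calc δ₃ * t ≤ rmin * δ₂ * t :=
              mul_le_mul_of_nonneg_right (min_le_right _ _) ht.le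
          _ ≤ prodr r I * dist u w := by
              calc rmin * δ₂ * t = (t * rmin) * δ₂ := by ring
                _ ≤ prodr r I * dist u w := by
                    apply mul_le_mul hprodI.le hsep (by positivity)
                      (prodr_pos r hr I).le
          _ = dist p q := hd.symm
      · have hint : (Pc I ∩ Pc L).Nonempty := Set.not_disjoint_iff_nonempty_inter.1 hdisj
        obtain ⟨hN, _⟩ := nmap_mem_N0 f r hr hsim K (rmin := rmin) hKcl hKattr hfin hKinf
          hrmin0 hrminle hrmin1 ht ht1 hI hL hIL hint
        have hq2 : q = wordMap f I (nmap f I L w) := by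
          have h5 := congrFun (nmap_eq f r hr hsim I L) w
          rw [Function.comp_apply] at h5
          rw [h5]
          exact hqEq
        have huw : u ≠ nmap f I L w := by
          intro h
          apply hpq
          rw [hpEq, hq2, h]
        have hd : dist p q = prodr r I * dist u (nmap f I L w) := by
          conv_lhs => rw [hpEq, hq2]
          exact dist_wordMap f r hsim I _ _
        have hsep := hδ₂ u hpG w hqG (nmap f I L) (Or.inl hN) huw
        calc δ₃ * t ≤ rmin * δ₂ * t :=
              mul_le_mul_of_nonneg_right (min_le_right _ _) ht.le
          _ ≤ prodr r I * dist u (nmap f I L w) := by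
              calc rmin * δ₂ * t = (t * rmin) * δ₂ := by ring
                _ ≤ _ := by
                    apply mul_le_mul hprodI.le hsep (by positivity)
                      (prodr_pos r hr I).le
          _ = dist p q := hd.symm
  -- the cover
  refine ⟨fun i => if i = 0
    then (fun I => {x ∈ Pc I | ∀ p ∈ 𝒥, β * t ≤ dist x p}) '' (Stopping r t)
    else (fun p => Metric.closedBall p (β * t) ∩ K) '' 𝒥, ?_, ?_, ?_⟩
  · -- covering
    intro x hx
    obtain ⟨I, hI, hxI⟩ := stopping_cover f r hr K hKattr hrmax hrmax1 hrmax0 ht hx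
    by_cases hxj : ∀ p ∈ 𝒥, β * t ≤ dist x p
    · refine mem_iUnion.2 ⟨0, ?_⟩
      simp only [if_pos rfl]
      exact ⟨_, ⟨I, hI, rfl⟩, hxI, hxj⟩
    · push_neg at hxj
      obtain ⟨p, hp, hdp⟩ := hxj
      refine mem_iUnion.2 ⟨1, ?_⟩
      simp only [if_neg (by decide : (1 : Fin 2) ≠ 0)]
      exact ⟨_, ⟨p, hp, rfl⟩, ⟨Metric.mem_closedBall.2 hdp.le, hx⟩⟩
  · -- diameters
    intro i U hU
    rcases eq_or_ne i 0 with rfl | hi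
    · simp only [if_pos rfl] at hU
      obtain ⟨I, hI, rfl⟩ := hU
      apply EMetric.diam_le
      intro x hx y hy
      obtain ⟨⟨x', hx', rfl⟩, _⟩ := hx
      obtain ⟨⟨y', hy', rfl⟩, _⟩ := hy
      rw [edist_dist]
      apply ENNReal.ofReal_le_ofReal
      rw [dist_wordMap f r hsim]
      calc prodr r I * dist x' y' ≤ t * D := by
            apply mul_le_mul hI.1 (Metric.dist_le_diam_of_mem hKc.isBounded hx' hy')
              dist_nonneg ht.le
        _ = s := htD
    · simp only [if_neg hi] at hU
      obtain ⟨p, hp, rfl⟩ := hU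
      apply EMetric.diam_le
      intro x hx y hy
      rw [edist_dist]
      apply ENNReal.ofReal_le_ofReal
      have hx' := Metric.mem_closedBall.1 hx.1
      have hy' := Metric.mem_closedBall.1 hy.1
      calc dist x y ≤ dist x p + dist p y := dist_triangle _ _ _
        _ ≤ β * t + β * t := by
            rw [dist_comm p y]; exact add_le_add hx' hy'
        _ ≤ D / 2 * t + D / 2 * t := by
            have : β ≤ D / 2 := min_le_right _ _
            have h2 := mul_le_mul_of_nonneg_right this ht.le
            linarith
        _ = t * D := by ring
        _ = s := htD
  · -- separation
    intro i U hU V hV hUV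
    rcases eq_or_ne i 0 with rfl | hi
    · simp only [if_pos rfl] at hU hV
      obtain ⟨I, hI, rfl⟩ := hU
      obtain ⟨J, hJ, rfl⟩ := hV
      have hIJ : I ≠ J := by
        intro h; exact hUV (by rw [h])
      intro x hx y hy
      obtain ⟨hxP, hxd⟩ := hx
      obtain ⟨hyP, hyd⟩ := hy
      by_cases hdisj : Disjoint (Pc I) (Pc J)
      · calc c * s ≤ γ * rmin / D * s := by
              apply mul_le_mul_of_nonneg_right ((min_le_left _ _).trans (min_le_right _ _)) hs.le
          _ = γ * rmin * t := by
              rw [htdef]; ring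
          _ ≤ dist x y := hγ t ht ht1 I hI J hJ hdisj x hxP y hyP
      · have hint : (Pc I ∩ Pc J).Nonempty := Set.not_disjoint_iff_nonempty_inter.1 hdisj
        obtain ⟨hN, _⟩ := nmap_mem_N0 f r hr hsim K (rmin := rmin) hKcl hKattr hfin hKinf
          hrmin0 hrminle hrmin1 ht ht1 hI hJ hIJ hint
        set h := nmap f I J with hhdef
        have hprodI_le : prodr r I ≤ t := hI.1
        have hprodI_pos := prodr_pos r hr I
        obtain ⟨x₁, hx₁K, hx₁e⟩ := hxP
        obtain ⟨y₂, hy₂K, hy₂e⟩ := hyP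
        set y₁ := h y₂ with hy₁def
        have hy₁e : wordMap f I y₁ = y := by
          rw [hy₁def, hhdef]
          have := congrFun (nmap_eq f r hr hsim I J) y₂
          rw [Function.comp_apply] at this
          rw [this, hy₂e]
        have hy₁mem : y₁ ∈ h '' K := ⟨y₂, hy₂K, rfl⟩
        have hcond : ∀ (z : EuclideanSpace ℝ (Fin d)) (z₁ : EuclideanSpace ℝ (Fin d)),
            wordMap f I z₁ = z → (∀ p ∈ 𝒥, β * t ≤ dist z p) →
            ∀ p ∈ K ∩ h '' K, β ≤ dist z₁ p := by
          intro z z₁ hze hzd p hp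
          have hpj : wordMap f I p ∈ 𝒥 := by
            obtain ⟨hpK, w, hwK, hwe⟩ := hp
            refine ⟨I, hI, J, hJ, hIJ, ⟨p, hpK, rfl⟩, ?_⟩
            have := congrFun (nmap_eq f r hr hsim I J) w
            rw [Function.comp_apply] at this
            rw [hhdef] at hwe
            rw [← hwe, this]
            exact ⟨w, hwK, rfl⟩
          have h1 : β * t ≤ dist z (wordMap f I p) := hzd _ hpj
          rw [← hze, dist_wordMap f r hsim] at h1
          by_contra hlt
          push_neg at hlt
          have h2 : prodr r I * dist z₁ p < prodr r I * β :=
            mul_lt_mul_of_pos_left hlt hprodI_pos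
          have h3 : prodr r I * β ≤ t * β := mul_le_mul_of_nonneg_right hprodI_le hβpos.le
          have h4 : t * β = β * t := mul_comm _ _
          linarith
        have hxcond := hcond x x₁ hx₁e hxd
        have hycond := hcond y y₁ hy₁e hyd
        have hsep := hψ₀ h hN x₁ hx₁K y₁ hy₁mem hxcond hycond
        calc c * s ≤ rmin * ψ₀ / D * s := by
              apply mul_le_mul_of_nonneg_right (min_le_right _ _) hs.le
          _ = rmin * ψ₀ * t := by rw [htdef]; ring
          _ = (t * rmin) * ψ₀ := by ring
          _ ≤ prodr r I * dist x₁ y₁ := by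
              apply mul_le_mul (stopping_lb r hr hrmin0 hrminle hrmin1 ht.le ht1 hI).le
                hsep (by positivity) hprodI_pos.le
          _ = dist x y := by
              rw [← hx₁e, ← hy₁e]
              exact (dist_wordMap f r hsim I x₁ y₁).symm
    · simp only [if_neg hi] at hU hV
      obtain ⟨p, hp, rfl⟩ := hU
      obtain ⟨q, hq, rfl⟩ := hV
      have hpq : p ≠ q := by
        intro h; exact hUV (by rw [h])
      intro x hx y hy
      have hsep := hjsep p hp q hq hpq
      have hx' := Metric.mem_closedBall.1 hx.1
      have hy' := Metric.mem_closedBall.1 hy.1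
      have htri : dist p q ≤ dist x p + dist x y + dist y q := by
        calc dist p q ≤ dist p x + dist x q := dist_triangle _ _ _
          _ ≤ dist p x + (dist x y + dist y q) := by
              have := dist_triangle x y q
              linarith
          _ = dist x p + dist x y + dist y q := by rw [dist_comm p x]; ring
      have hβδ : β ≤ δ₃ / 4 := min_le_left _ _
      calc c * s ≤ δ₃ / (2 * D) * s := by
            apply mul_le_mul_of_nonneg_right ((min_le_left _ _).trans (min_le_left _ _)) hs.le
        _ = δ₃ / 2 * t := by rw [htdef]; ring
        _ ≤ dist x y := by
            have h1 : β * t ≤ δ₃ / 4 * t := mul_le_mul_of_nonneg_right hβδ ht.le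
            have h2 : δ₃ * t ≤ dist p q := hsep
            nlinarith [ht.le]
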